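/- Let k be a field and R a commutative k-algebra. Then the set f_R := {f ∈ R : the localization R_f of R away from f is a finitely generated k-algebra} ∪ {0} is a radical ideal of R. -/

import Mathlib

section Aux

universe u v

variable {k : Type u} [Field k]

/-- A subsingleton algebra is of finite type. -/
private lemma ft_of_subsingleton (A : Type v) [CommRing A] [Algebra k A] [Subsingleton A] :
    Algebra.FiniteType k A :=
  ⟨⟨∅, eq_top_iff.mpr fun x _ => by
      rw [Subsingleton.elim x 0]; exact Subalgebra.zero_mem _⟩⟩

private lemma ft_ringHom_iff (A : Type u) (B : Type v) [CommRing A] [CommRing B] [Algebra A B] :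
    (algebraMap A B).FiniteType ↔ Algebra.FiniteType A B := by
  have h : (algebraMap A B).toAlgebra = ‹Algebra A B› :=
    Algebra.algebra_ext _ _ fun r => rfl
  show @Algebra.FiniteType A B _ _ (algebraMap A B).toAlgebra ↔ _
  rw [h]

/-- Finite type over `k` is equivalent to finite type over the range of `k`
(composed with a further ring hom). -/
private lemma ft_comp_range_iff {A B : Type v} [CommRing A] [CommRing B]
    (g : k →+* A) (ψ : A →+* B) :
    (ψ.comp g.range.subtype).FiniteType ↔ (ψ.comp g).FiniteType := by
  letI : Algebra k B := (ψ.comp g).toAlgebra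
  letI : Algebra (↥g.range) B := (ψ.comp g.range.subtype).toAlgebra
  letI : Algebra k (↥g.range) := g.rangeRestrict.toAlgebra
  haveI : IsScalarTower k (↥g.range) B :=
    IsScalarTower.of_algebraMap_eq fun x => rfl
  show Algebra.FiniteType (↥g.range) B ↔ Algebra.FiniteType k B
  constructor
  · intro h
    have hk : Algebra.FiniteType k (↥g.range) :=
      Algebra.FiniteType.of_surjective (A := k)
        (Algebra.ofId k (↥g.range)) g.rangeRestrict_surjective
    exact Algebra.FiniteType.trans hk h
  · intro h
    exact Algebra.FiniteType.of_restrictScalars_finiteType (R := k) (S := ↥g.range) (A := B)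

variable {R : Type v} [CommRing R] [Algebra k R]

/-- If `R_f` is finite type over `k`, then so is `R_{gf}` for any `g`. -/
private lemma ft_away_mul (f g : R) (hf : Algebra.FiniteType k (Localization.Away f)) :
    Algebra.FiniteType k (Localization.Away (g * f)) := by
  have h1 : Algebra.FiniteType (Localization.Away f)
      (Localization.Away (algebraMap R (Localization.Away f) g)) :=
    IsLocalization.finiteType_of_monoid_fg
      (Submonoid.powers (algebraMap R (Localization.Away f) g)) _
  have h2 : Algebra.FiniteType k
      (Localization.Away (algebraMap R (Localization.Away f) g)) :=
    Algebra.FiniteType.trans hf h1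
  exact h2.equiv ((IsLocalization.algEquiv (Submonoid.powers (g * f))
    (Localization.Away (algebraMap R (Localization.Away f) g))
    (Localization.Away (g * f))).restrictScalars k)

private lemma away_pow_isLoc (f : R) {n : ℕ} (hn : n ≠ 0) :
    IsLocalization.Away f (Localization.Away (f ^ n)) := by
  refine IsLocalization.Away.mk f ?_ (fun s => ?_) (fun a b h => ?_)
  · exact isUnit_of_dvd_unit (map_dvd _ (dvd_pow_self f hn))
      (IsLocalization.Away.algebraMap_isUnit (f ^ n))
  · obtain ⟨m, a, hm⟩ := IsLocalization.Away.surj (S := Localization.Away (f ^ n)) (f ^ n) s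
    refine ⟨n * m, a, ?_⟩
    rw [← map_pow, pow_mul, map_pow]
    exact hm
  · obtain ⟨m, hm⟩ := IsLocalization.Away.exists_of_eq (S := Localization.Away (f ^ n))
      (x := f ^ n) h
    exact ⟨n * m, by rw [pow_mul]; exact hm⟩

/-- If `R_{f^n}` is finite type over `k` for some `n ≠ 0`, then so is `R_f`. -/
private lemma ft_away_of_pow (f : R) {n : ℕ} (hn : n ≠ 0)
    (h : Algebra.FiniteType k (Localization.Away (f ^ n))) :
    Algebra.FiniteType k (Localization.Away f) := by
  haveI := away_pow_isLoc f hn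
  exact h.equiv ((IsLocalization.algEquiv (Submonoid.powers f)
    (Localization.Away (f ^ n)) (Localization.Away f)).restrictScalars k)

/-- The key gluing step: if `R_f` and `R_g` are finite type over `k`,
then so is `R_{f+g}`. -/
private lemma ft_away_add (f g : R)
    (hf : Algebra.FiniteType k (Localization.Away f))
    (hg : Algebra.FiniteType k (Localization.Away g)) :
    Algebra.FiniteType k (Localization.Away (f + g)) := by
  set h : R := f + g with hh
  set L : Type v := Localization.Away h with hL
  -- the images of f and g generate the unit ideal of L
  have hspan : Ideal.span ({algebraMap R L f, algebraMap R L g} : Set L) = ⊤ := by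
    refine Ideal.eq_top_of_isUnit_mem _ ?_ (IsLocalization.Away.algebraMap_isUnit h)
    have : algebraMap R L h = algebraMap R L f + algebraMap R L g :=
      map_add (algebraMap R L) f g
    rw [this]
    exact Ideal.add_mem _ (Ideal.subset_span (by simp)) (Ideal.subset_span (by simp))
  -- for each a ∈ {f, g}, the localization of L at the image of a is finite type over k
  have main : ∀ a : R, Algebra.FiniteType k (Localization.Away (a * h)) →
      ((algebraMap L (Localization.Away (algebraMap R L a))).comp
        (algebraMap k L).range.subtype).FiniteType := by
    intro a ha
    rw [ft_comp_range_iff (algebraMap k L) (algebraMap L (Localization.Away (algebraMap R L a)))]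
    have e : (algebraMap L (Localization.Away (algebraMap R L a))).comp (algebraMap k L)
        = algebraMap k (Localization.Away (algebraMap R L a)) :=
      (IsScalarTower.algebraMap_eq k L _).symm
    rw [e, ft_ringHom_iff]
    exact ha.equiv ((IsLocalization.algEquiv (Submonoid.powers (a * h))
      (Localization.Away (a * h))
      (Localization.Away (algebraMap R L a))).restrictScalars k)
  have hloc : ∀ r : ({algebraMap R L f, algebraMap R L g} : Set L),
      ((algebraMap L (Localization.Away (r : L))).comp
        (algebraMap k L).range.subtype).FiniteType := by
    rintro ⟨r, hr | hr⟩
    · subst hr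
      refine main f ?_
      have := ft_away_mul (k := k) f h hf
      rwa [mul_comm] at this
    · rcases hr with rfl
      refine main g ?_
      have := ft_away_mul (k := k) g h hg
      rwa [mul_comm] at this
  have H := RingHom.finiteType_ofLocalizationSpanTarget
    (algebraMap k L).range.subtype _ hspan hloc
  have H' : ((RingHom.id L).comp (algebraMap k L).range.subtype).FiniteType := by
    rwa [RingHom.id_comp]
  rw [ft_comp_range_iff (algebraMap k L) (RingHom.id L), RingHom.id_comp,
    ft_ringHom_iff] at H'
  exact H'

end Aux

/-- The finite generation ideal: for a commutative `k`-algebra `R`, the set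
`{f : R | R_f is a finitely generated k-algebra} ∪ {0}` is a radical ideal of `R`. -/
theorem stmt_0 (k R : Type*) [Field k] [CommRing R] [Algebra k R] :
    ∃ I : Ideal R, I.IsRadical ∧
      ∀ f : R, f ∈ I ↔ (f = 0 ∨ Algebra.FiniteType k (Localization.Away f)) := by
  refine ⟨{ carrier := {f | f = 0 ∨ Algebra.FiniteType k (Localization.Away f)}
            zero_mem' := Or.inl rfl
            add_mem' := ?_
            smul_mem' := ?_ }, ?_, fun f => Iff.rfl⟩
  · rintro a b (rfl | ha) hb
    · rwa [zero_add]
    · rcases hb with rfl | hb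
      · rw [add_zero]; exact Or.inr ha
      · exact Or.inr (ft_away_add a b ha hb)
  · rintro c x (rfl | hx)
    · rw [smul_zero]; exact Or.inl rfl
    · right
      rw [smul_eq_mul]
      exact ft_away_mul x c hx
  · rw [Ideal.isRadical_iff_pow_one_lt 2 one_lt_two]
    rintro r (hr | hr)
    · -- r ^ 2 = 0 : the localization away from r is trivial
      right
      haveI : Subsingleton (Localization.Away r) :=
        IsLocalization.subsingleton (M := Submonoid.powers r)
          (S := Localization.Away r) ⟨2, hr⟩
      exact ft_of_subsingleton _
    · exact Or.inr (ft_away_of_pow r two_ne_zero hr)
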